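/- Let (V_n) be the levels of a history graph with 1-Lipschitz parent projections f_{m,n} : V_n → V_m for m ≤ n. Suppose there exist positive integers M, j such that whenever x, y ∈ V_{n+j} have finite level-distance and d_n(f_{n,n+j}(x), f_{n,n+j}(y)) = M, then d_{n+j}(x,y) > M. Then for all x, y ∈ V_{n+j} of finite level-distance with d_n(f_{n,n+j}(x), f_{n,n+j}(y)) > M, one has d_{n+j}(x,y) > d_n(f_{n,n+j}(x), f_{n,n+j}(y)). -/

import Mathlib

open scoped ENNReal

/-- Bootstrapping step for hyperbolic subdivision rules: if whenever two points of
`V (n+j)` at finite level-distance project to points of `V n` at distance exactly `M`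
their level-distance exceeds `M`, then whenever the projected distance is greater than
`M`, the level-distance strictly exceeds the projected distance. -/
theorem hyperbolicity_bootstrap (V : ℕ → Type*)
    (d : ∀ n : ℕ, V n → V n → ℝ≥0∞)
    (hsymm : ∀ (n : ℕ) (x y : V n), d n x y = d n y x)
    (hzero : ∀ (n : ℕ) (x : V n), d n x x = 0)
    (htri : ∀ (n : ℕ) (x y z : V n), d n x z ≤ d n x y + d n y z)
    -- path metric: finite distances are realized by points at any intermediate distance
    (hpath : ∀ (n : ℕ) (x y : V n) (m : ℕ), d n x y < ⊤ → (m : ℝ≥0∞) ≤ d n x y →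
      ∃ p : V n, d n x p = m ∧ d n x p + d n p y = d n x y)
    (f : ∀ {m n : ℕ}, m ≤ n → V n → V m)
    (hcomp : ∀ {m k n : ℕ} (h₁ : m ≤ k) (h₂ : k ≤ n) (x : V n),
      f (h₁.trans h₂) x = f h₁ (f h₂ x))
    (hlip : ∀ {m n : ℕ} (h : m ≤ n) (x y : V n), d m (f h x) (f h y) ≤ d n x y)
    (M j : ℕ) (hM : 0 < M) (hj : 0 < j)
    (hhyp : ∀ (n : ℕ) (x y : V (n + j)), d (n + j) x y < ⊤ →
      d n (f (Nat.le_add_right n j) x) (f (Nat.le_add_right n j) y) = (M : ℝ≥0∞) →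
      (M : ℝ≥0∞) < d (n + j) x y) :
    ∀ (n : ℕ) (x y : V (n + j)), d (n + j) x y < ⊤ →
      (M : ℝ≥0∞) < d n (f (Nat.le_add_right n j) x) (f (Nat.le_add_right n j) y) →
      d n (f (Nat.le_add_right n j) x) (f (Nat.le_add_right n j) y) < d (n + j) x y := by
  intro n x y hfin hMlt
  set D := d n (f (Nat.le_add_right n j) x) (f (Nat.le_add_right n j) y) with hD
  set L := d (n + j) x y with hL
  have hDL : D ≤ L := hlip _ x y
  by_contra hcon
  push_neg at hcon
  have hLD : L = D := le_antisymm hcon hDL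
  -- find p on a geodesic from x to y with d x p = M
  have hMleL : (M : ℝ≥0∞) ≤ L := le_of_lt (lt_of_lt_of_le hMlt hDL)
  obtain ⟨p, hxp, hsum⟩ := hpath (n + j) x y M hfin hMleL
  have hpyfin : d (n + j) p y < ⊤ := by
    refine lt_of_le_of_lt ?_ hfin
    calc d (n + j) p y ≤ d (n + j) x p + d (n + j) p y := le_add_self
      _ = L := hsum
  -- projected distance from f x to f p equals M
  have hle : d n (f (Nat.le_add_right n j) x) (f (Nat.le_add_right n j) p) ≤ (M : ℝ≥0∞) :=
    hxp ▸ hlip _ x p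
  have hge : (M : ℝ≥0∞) ≤ d n (f (Nat.le_add_right n j) x) (f (Nat.le_add_right n j) p) := by
    have h1 : D ≤ d n (f (Nat.le_add_right n j) x) (f (Nat.le_add_right n j) p)
        + d n (f (Nat.le_add_right n j) p) (f (Nat.le_add_right n j) y) := htri _ _ _ _
    have h2 : d n (f (Nat.le_add_right n j) p) (f (Nat.le_add_right n j) y)
        ≤ d (n + j) p y := hlip _ p y
    have key : (M : ℝ≥0∞) + d (n + j) p y
        ≤ d n (f (Nat.le_add_right n j) x) (f (Nat.le_add_right n j) p) + d (n + j) p y := by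
      calc (M : ℝ≥0∞) + d (n + j) p y = L := by rw [← hxp]; exact hsum
        _ = D := hLD
        _ ≤ _ + _ := h1
        _ ≤ _ + d (n + j) p y := add_le_add_right h2 _
    exact (ENNReal.add_le_add_iff_right hpyfin.ne).mp key
  have heq : d n (f (Nat.le_add_right n j) x) (f (Nat.le_add_right n j) p) = (M : ℝ≥0∞) :=
    le_antisymm hle hge
  have hxpfin : d (n + j) x p < ⊤ := by rw [hxp]; exact ENNReal.natCast_lt_top M
  have := hhyp n x p hxpfin heq
  rw [hxp] at this
  exact lt_irrefl _ this
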